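/- For all k ≥ 0, the number of distinct subwords of length |p^(k)|+1 occurring in the simple Toeplitz subshift equals (|A_k| − 1)·(|p^(k)|+1) + 1_{A_{k+1}}(a_k)·(|p^(k−1)|+1), where A_k := {a_j : j ≥ k} and 1_{A_{k+1}}(a_k) is 1 if a_k ∈ A_{k+1} and 0 otherwise. -/

import Mathlib

open Classical

def pBlock {A : Type*} (a : ℕ → A) (n : ℕ → ℕ) : ℕ → List A
  | 0 => []
  | k + 1 => (List.replicate (n k - 1) (pBlock a n k ++ [a k])).flatten ++ pBlock a n k

/-- The one-sided infinite limit word `p^(∞)` of the nested blocks `p^(k)`. -/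
def pInf {A : Type*} (a : ℕ → A) (n : ℕ → ℕ) : ℕ → A :=
  fun i => (pBlock a n (i + 2)).getD i (a 0)

def occursIn1 {A : Type*} (u : List A) (ρ : ℕ → A) : Prop :=
  ∃ j : ℕ, ∀ i : Fin u.length, u.get i = ρ (j + (i : ℕ))

/-- The complexity function: the number of distinct words of length `L` in the language of
the subshift generated by `ρ`. -/
noncomputable def complexity {A : Type*} (ρ : ℕ → A) (L : ℕ) : ℕ :=
  Nat.card {u : List A // u.length = L ∧ occursIn1 u ρ}

namespace Toep

variable {A : Type*} (a : ℕ → A) (n : ℕ → ℕ)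

def LL (a : ℕ → A) (n : ℕ → ℕ) (m : ℕ) : ℕ := (pBlock a n m).length + 1

def cw (m : ℕ) (j : ℕ) : A := (pBlock a n m ++ [a m]).getD (j % LL a n m) (a 0)

lemma LL_pos (m : ℕ) : 0 < LL a n m := Nat.succ_pos _

lemma length_hat (m : ℕ) : (pBlock a n m ++ [a m]).length = LL a n m := by
  simp [LL]

lemma pBlock_succ (m : ℕ) :
    pBlock a n (m + 1)
      = (List.replicate (n m - 1) (pBlock a n m ++ [a m])).flatten ++ pBlock a n m := rfl

/-- The filled block at level `m+1` is `n m` copies of the filled block at level `m`. -/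
lemma hat_succ (hn : ∀ k, 2 ≤ n k) (m : ℕ) :
    pBlock a n (m + 1) ++ [a m]
      = (List.replicate (n m) (pBlock a n m ++ [a m])).flatten := by
  conv_rhs => rw [show n m = (n m - 1) + 1 by have := hn m; omega]
  rw [List.replicate_succ', List.flatten_append, pBlock_succ]
  simp [List.append_assoc]

lemma LL_succ (hn : ∀ k, 2 ≤ n k) (m : ℕ) :
    LL a n (m + 1) = n m * LL a n m := by
  have h := congrArg List.length (hat_succ a n hn m)
  simp only [List.length_append, List.length_flatten, List.map_replicate,
    List.length_singleton, List.sum_replicate, smul_eq_mul] at h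
  simp only [LL]
  omega

lemma flatten_replicate_getD (u : List A) (d : A) :
    ∀ (c j : ℕ), j < c * u.length →
      ((List.replicate c u).flatten).getD j d = u.getD (j % u.length) d := by
  intro c
  induction c with
  | zero => intro j hj; simp at hj
  | succ c ih =>
    intro j hj
    rw [add_one_mul] at hj
    rw [List.replicate_succ, List.flatten_cons]
    rcases lt_or_ge j u.length with h | h
    · rw [List.getD_append _ _ _ _ h, Nat.mod_eq_of_lt h]
    · have harg : j - u.length < c * u.length := by omega
      rw [List.getD_append_right _ _ _ _ h, ih (j - u.length) harg]
      congr 1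
      conv_rhs => rw [show j = j - u.length + u.length by omega]
      rw [Nat.add_mod_right]

/-- Key single-step lemma: `cw (m+1)` refines `cw m` away from top separators. -/
lemma cw_succ_sep (m j : ℕ) (h : j % LL a n (m + 1) = (pBlock a n (m + 1)).length) :
    cw a n (m + 1) j = a (m + 1) := by
  rw [cw, h, List.getD_append_right _ _ _ _ (le_refl _)]
  simp

lemma cw_getD (m j : ℕ) :
    cw a n m j = (pBlock a n m ++ [a m]).getD (j % LL a n m) (a 0) := rfl

/-- `cw m` only depends on `j % LL m`. -/
lemma cw_congr (m : ℕ) {j j' : ℕ} (h : j % LL a n m = j' % LL a n m) :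
    cw a n m j = cw a n m j' := by
  rw [cw, cw, h]

lemma LL_dvd_succ (hn : ∀ k, 2 ≤ n k) (m : ℕ) : LL a n m ∣ LL a n (m + 1) :=
  ⟨n m, by rw [LL_succ a n hn m]; ring⟩

lemma LL_dvd (hn : ∀ k, 2 ≤ n k) {m m' : ℕ} (h : m ≤ m') : LL a n m ∣ LL a n m' := by
  induction m' with
  | zero => simp [Nat.le_zero.mp h]
  | succ m' ih =>
    rcases Nat.lt_or_ge m (m' + 1) with h' | h'
    · exact dvd_trans (ih (by omega)) (LL_dvd_succ a n hn m')
    · have : m = m' + 1 := by omega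
      subst this; rfl

lemma cw_succ_nonsep (hn : ∀ k, 2 ≤ n k) (m j : ℕ)
    (h : j % LL a n (m + 1) ≠ (pBlock a n (m + 1)).length) :
    cw a n (m + 1) j = cw a n m j := by
  have hmod : j % LL a n (m + 1) < LL a n (m + 1) := Nat.mod_lt _ (LL_pos a n (m + 1))
  have hlt : j % LL a n (m + 1) < (pBlock a n (m + 1)).length := by
    have : LL a n (m + 1) = (pBlock a n (m + 1)).length + 1 := rfl
    omega
  set r := j % LL a n (m + 1) with hr
  have e1 : cw a n (m + 1) j = (pBlock a n (m + 1)).getD r (a 0) := by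
    rw [cw, List.getD_append _ _ _ _ hlt]
  have e2 : (pBlock a n (m + 1)).getD r (a 0)
      = (pBlock a n (m + 1) ++ [a m]).getD r (a 0) := by
    rw [List.getD_append _ _ _ _ hlt]
  have e3 : (pBlock a n (m + 1) ++ [a m]).getD r (a 0)
      = (pBlock a n m ++ [a m]).getD (r % LL a n m) (a 0) := by
    rw [hat_succ a n hn m]
    have hrlt : r < n m * (pBlock a n m ++ [a m]).length := by
      rw [length_hat, ← LL_succ a n hn m]; exact hmod
    rw [flatten_replicate_getD _ _ _ _ hrlt, length_hat]
  have e4 : (pBlock a n m ++ [a m]).getD (r % LL a n m) (a 0) = cw a n m j := by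
    rw [cw]
    congr 1
    rw [hr, Nat.mod_mod_of_dvd _ (LL_dvd_succ a n hn m)]
  rw [e1, e2, e3, e4]

/-- `pBlock (m+1)` agrees with `cw m` on its whole length. -/
lemma pBlock_succ_eq_cw (hn : ∀ k, 2 ≤ n k) (m j : ℕ)
    (hj : j < (pBlock a n (m + 1)).length) :
    (pBlock a n (m + 1)).getD j (a 0) = cw a n m j := by
  have hj' : j < LL a n (m + 1) := by rw [LL]; omega
  have e2 : (pBlock a n (m + 1)).getD j (a 0)
      = (pBlock a n (m + 1) ++ [a m]).getD j (a 0) := by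
    rw [List.getD_append _ _ _ _ hj]
  rw [e2, hat_succ a n hn m]
  have hrlt : j < n m * (pBlock a n m ++ [a m]).length := by
    rw [length_hat, ← LL_succ a n hn m]; exact hj'
  rw [flatten_replicate_getD _ _ _ _ hrlt, length_hat, cw]


lemma mod_pred {b c : ℕ} (hb : 0 < b) (hc : 0 < c) (h : b ∣ c) : (c - 1) % b = b - 1 := by
  obtain ⟨q, rfl⟩ := h
  rcases q with _ | q
  · omega
  · have h1 : b * (q + 1) - 1 = b * q + (b - 1) := by
      rw [Nat.mul_succ]; omega
    rw [h1, Nat.mul_add_mod, Nat.mod_eq_of_lt (by omega)]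

lemma sep_cascade (hn : ∀ k, 2 ≤ n k) {m m' : ℕ} (h : m ≤ m') {j : ℕ}
    (hj : j % LL a n m' = (pBlock a n m').length) : j % LL a n m = (pBlock a n m).length := by
  have hd := LL_dvd a n hn h
  have : j % LL a n m = (j % LL a n m') % LL a n m :=
    (Nat.mod_mod_of_dvd _ hd).symm
  rw [this, hj]
  have hlen : (pBlock a n m').length = LL a n m' - 1 := rfl
  rw [hlen, mod_pred (LL_pos a n m) (LL_pos a n m') hd]
  rfl

lemma cw_chain (hn : ∀ k, 2 ≤ n k) (m t j : ℕ)
    (h : j % LL a n (m + 1) ≠ (pBlock a n (m + 1)).length) :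
    cw a n (m + t) j = cw a n m j := by
  induction t with
  | zero => rfl
  | succ t ih =>
    have hstep : cw a n (m + t + 1) j = cw a n (m + t) j := by
      apply cw_succ_nonsep a n hn
      intro hc
      exact h (sep_cascade a n hn (by omega) hc)
    rw [show m + (t+1) = m + t + 1 from rfl, hstep, ih]

lemma cw_sep_range (hn : ∀ k, 2 ≤ n k) (t m j : ℕ)
    (h : j % LL a n m = (pBlock a n m).length) :
    ∃ r, m ≤ r ∧ r ≤ m + t ∧ cw a n (m + t) j = a r := by
  induction t with
  | zero =>
    refine ⟨m, le_refl _, by omega, ?_⟩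
    simp only [Nat.add_zero]
    rw [cw, h, List.getD_append_right _ _ _ _ (le_refl _)]
    simp
  | succ t ih =>
    by_cases hc : j % LL a n (m + t + 1) = (pBlock a n (m + t + 1)).length
    · exact ⟨m + t + 1, by omega, by omega, cw_succ_sep a n _ _ hc⟩
    · obtain ⟨r, h1, h2, h3⟩ := ih
      exact ⟨r, h1, by omega, by
        rw [show m + (t+1) = m + t + 1 from rfl, cw_succ_nonsep a n hn _ _ hc, h3]⟩

lemma pBlock_prefix_succ (hn : ∀ k, 2 ≤ n k) (m : ℕ) :
    pBlock a n m <+: pBlock a n (m + 1) := by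
  obtain ⟨c, hc⟩ : ∃ c, n m - 1 = c + 1 := ⟨n m - 2, by have := hn m; omega⟩
  rw [pBlock_succ, hc, List.replicate_succ, List.flatten_cons]
  exact ⟨[a m] ++ (List.replicate c (pBlock a n m ++ [a m])).flatten ++ pBlock a n m, by
    simp [List.append_assoc]⟩

lemma pBlock_prefix (hn : ∀ k, 2 ≤ n k) {m m' : ℕ} (h : m ≤ m') :
    pBlock a n m <+: pBlock a n m' := by
  induction m' with
  | zero => rw [Nat.le_zero.mp h]
  | succ m' ih =>
    rcases Nat.lt_or_ge m (m' + 1) with h' | h'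
    · exact (ih (by omega)).trans (pBlock_prefix_succ a n hn m')
    · have : m = m' + 1 := by omega
      subst this; rfl

lemma two_pow_le_LL (hn : ∀ k, 2 ≤ n k) (m : ℕ) : 2 ^ m ≤ LL a n m := by
  induction m with
  | zero => simp [LL, pBlock]
  | succ m ih =>
    rw [LL_succ a n hn m, pow_succ]
    calc 2 ^ m * 2 ≤ LL a n m * 2 := Nat.mul_le_mul_right _ ih
    _ = 2 * LL a n m := mul_comm _ _
    _ ≤ n m * LL a n m := Nat.mul_le_mul_right _ (hn m)

lemma lt_len (hn : ∀ k, 2 ≤ n k) (i : ℕ) : i < (pBlock a n (i + 2)).length := by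
  have h1 : 2 ^ (i + 2) ≤ LL a n (i + 2) := two_pow_le_LL a n hn _
  have h2 : i + 2 < 2 ^ (i + 2) := Nat.lt_two_pow_self
  have : LL a n (i + 2) = (pBlock a n (i + 2)).length + 1 := rfl
  omega

lemma pInf_eq_getD (hn : ∀ k, 2 ≤ n k) (M i : ℕ) (h : i < (pBlock a n M).length) :
    pInf a n i = (pBlock a n M).getD i (a 0) := by
  rcases Nat.le_total M (i + 2) with hM | hM
  · rw [pInf, List.getD_eq_getElem _ _ (lt_len a n hn i), List.getD_eq_getElem _ _ h]
    exact ((pBlock_prefix a n hn hM).getElem h).symm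
  · rw [pInf, List.getD_eq_getElem _ _ (lt_len a n hn i), List.getD_eq_getElem _ _ h]
    exact (pBlock_prefix a n hn hM).getElem (lt_len a n hn i)

lemma pInf_eq_cw (hn : ∀ k, 2 ≤ n k) (m i : ℕ)
    (h : i % LL a n (m + 1) ≠ (pBlock a n (m + 1)).length) :
    pInf a n i = cw a n m i := by
  have hbig : i < (pBlock a n (m + i + 2)).length := by
    have h1 : 2 ^ (i + 2) ≤ LL a n (i + 2) := two_pow_le_LL a n hn _
    have h2 : LL a n (i + 2) ≤ LL a n (m + i + 2) :=
      Nat.le_of_dvd (LL_pos a n _) (LL_dvd a n hn (by omega))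
    have h3 : i + 2 < 2 ^ (i + 2) := Nat.lt_two_pow_self
    have : LL a n (m + i + 2) = (pBlock a n (m + i + 2)).length + 1 := rfl
    omega
  rw [pInf_eq_getD a n hn (m + i + 2) i hbig,
    pBlock_succ_eq_cw a n hn (m + i + 1) i (by rw [show m + i + 1 + 1 = m + i + 2 from rfl]; exact hbig)]
  exact cw_chain a n hn m (i + 1) i h

lemma pInf_sep (hn : ∀ k, 2 ≤ n k) (m i : ℕ)
    (h : i % LL a n m = (pBlock a n m).length) :
    ∃ r, m ≤ r ∧ pInf a n i = a r := by
  have hbig : i < (pBlock a n (m + i + 2)).length := by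
    have h1 : 2 ^ (i + 2) ≤ LL a n (i + 2) := two_pow_le_LL a n hn _
    have h2 : LL a n (i + 2) ≤ LL a n (m + i + 2) :=
      Nat.le_of_dvd (LL_pos a n _) (LL_dvd a n hn (by omega))
    have h3 : i + 2 < 2 ^ (i + 2) := Nat.lt_two_pow_self
    have : LL a n (m + i + 2) = (pBlock a n (m + i + 2)).length + 1 := rfl
    omega
  obtain ⟨r, h1, _, h3⟩ := cw_sep_range a n hn (i + 1) m i h
  refine ⟨r, h1, ?_⟩
  rw [pInf_eq_getD a n hn (m + i + 2) i hbig,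
    pBlock_succ_eq_cw a n hn (m + i + 1) i (by rw [show m + i + 1 + 1 = m + i + 2 from rfl]; exact hbig),
    show m + i + 1 = m + (i + 1) from rfl, h3]


lemma cw_self_sep (m j : ℕ) (h : j % LL a n m = (pBlock a n m).length) :
    cw a n m j = a m := by
  rw [cw, h, List.getD_append_right _ _ _ _ (le_refl _)]
  simp

lemma pInf_len (hn : ∀ k, 2 ≤ n k) (r : ℕ) :
    pInf a n ((pBlock a n r).length) = a r := by
  have hlt : (pBlock a n r).length < (pBlock a n (r + 1)).length := by
    have h1 := LL_succ a n hn r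
    have h2 : 2 * LL a n r ≤ n r * LL a n r := Nat.mul_le_mul_right _ (hn r)
    have e1 : LL a n r = (pBlock a n r).length + 1 := rfl
    have e2 : LL a n (r + 1) = (pBlock a n (r + 1)).length + 1 := rfl
    omega
  rw [pInf_eq_getD a n hn (r + 1) _ hlt, pBlock_succ_eq_cw a n hn r _ hlt]
  exact cw_self_sep a n r _ (Nat.mod_eq_of_lt (by rw [LL]; omega))

lemma core (hn : ∀ k, 2 ≤ n k) (ha : ∀ k, a (k + 1) ≠ a k) :
    ∀ m d, 0 < d → d < LL a n (m + 1) →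
    (∀ j, j < (pBlock a n (m + 1)).length →
        (j + d) % LL a n (m + 1) ≠ (pBlock a n (m + 1)).length →
        cw a n m j = cw a n m (j + d)) →
    LL a n m ∣ d ∧ cw a n m (d - 1) = a m := by
  intro m
  induction m with
  | zero =>
    intro d hd hdL _
    constructor
    · simpa [LL, pBlock] using Nat.one_dvd d
    · rw [cw]
      simp [pBlock, LL]
  | succ m ih =>
    intro d hd hdL hyp
    have hL : LL a n (m + 2) = n (m + 1) * LL a n (m + 1) := LL_succ a n hn (m + 1)
    have hL'pos : 0 < LL a n (m + 1) := LL_pos a n (m + 1)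
    have hLpos : 0 < LL a n (m + 2) := LL_pos a n (m + 2)
    have h2L : 2 * LL a n (m + 1) ≤ LL a n (m + 2) := by
      rw [hL]; exact Nat.mul_le_mul_right _ (hn (m + 1))
    have hlen2 : LL a n (m + 2) = (pBlock a n (m + 2)).length + 1 := rfl
    have hlen1 : LL a n (m + 1) = (pBlock a n (m + 1)).length + 1 := rfl
    by_cases hdvd : d % LL a n (m + 1) = 0
    · refine ⟨Nat.dvd_of_mod_eq_zero hdvd, ?_⟩
      apply cw_succ_sep
      rw [mod_pred hL'pos hd (Nat.dvd_of_mod_eq_zero hdvd)]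
      omega
    · exfalso
      -- Step 1: full periodicity of `cw (m+1)` with period `d`.
      have per_d : ∀ j, cw a n (m + 1) (j + d) = cw a n (m + 1) j := by
        intro j
        have hj0 : j % LL a n (m + 1) < LL a n (m + 1) := Nat.mod_lt _ hL'pos
        set j0 := j % LL a n (m + 1) with hj0def
        -- choose a good representative j' ∈ {j0, j0 + L'}
        have hgood : ∃ j', j' % LL a n (m + 1) = j0 ∧ j' < (pBlock a n (m + 2)).length ∧
            (j' + d) % LL a n (m + 2) ≠ (pBlock a n (m + 2)).length := by
          by_cases hc1 : (j0 + d) % LL a n (m + 2) = (pBlock a n (m + 2)).length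
          · -- use j0 + L'
            refine ⟨j0 + LL a n (m + 1), by rw [Nat.add_mod_right]; exact Nat.mod_eq_of_lt hj0, ?_, ?_⟩
            · -- j0 + L' < len (m+2), i.e. ≠ L - 1
              rcases Nat.lt_or_ge (j0 + LL a n (m + 1)) ((pBlock a n (m + 2)).length) with h | h
              · exact h
              · exfalso
                have heq : j0 + LL a n (m + 1) = (pBlock a n (m + 2)).length := by omega
                -- then from hc1 : j0 + d ≡ j0 + L' (mod L) so d ≡ L' (mod L), d = L', contra
                have h1 : (j0 + d) % LL a n (m + 2)
                    = (j0 + LL a n (m + 1)) % LL a n (m + 2) := by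
                  rw [hc1, heq, Nat.mod_eq_of_lt (by omega)]
                have h2 : d % LL a n (m + 2) = LL a n (m + 1) % LL a n (m + 2) :=
                  Nat.ModEq.add_left_cancel' j0 h1
                rw [Nat.mod_eq_of_lt hdL, Nat.mod_eq_of_lt (by omega)] at h2
                rw [h2] at hdvd
                exact hdvd (Nat.mod_self _)
            · -- (j0 + L' + d) % L ≠ len
              intro hc2
              have h1 : (j0 + d + LL a n (m + 1)) % LL a n (m + 2)
                  = (j0 + d) % LL a n (m + 2) := by
                rw [show j0 + LL a n (m + 1) + d = j0 + d + LL a n (m + 1) by ring] at hc2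
                rw [hc2, hc1]
              have h2 : LL a n (m + 1) % LL a n (m + 2) = 0 % LL a n (m + 2) :=
                Nat.ModEq.add_left_cancel' (j0 + d) (by rw [Nat.add_zero]; exact h1)
              rw [Nat.mod_eq_of_lt (by omega), Nat.zero_mod] at h2
              omega
          · exact ⟨j0, Nat.mod_eq_of_lt hj0, by omega, hc1⟩
        obtain ⟨j', hj'm, hj'len, hj'd⟩ := hgood
        have e1 : cw a n (m + 1) j = cw a n (m + 1) j' := by
          apply cw_congr; rw [hj'm]
        have e2 : cw a n (m + 1) (j + d) = cw a n (m + 1) (j' + d) := by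
          apply cw_congr
          rw [Nat.add_mod, Nat.add_mod j', hj'm, hj0def]
        rw [e1, e2]
        exact (hyp j' hj'len hj'd).symm
      have per_L' : ∀ j, cw a n (m + 1) (j + LL a n (m + 1)) = cw a n (m + 1) j := by
        intro j
        apply cw_congr
        exact Nat.add_mod_right _ _
      -- Step 2: gcd argument via ZMod
      haveI : NeZero (LL a n (m + 2)) := ⟨by omega⟩
      set L : ℕ := LL a n (m + 2) with hLdef
      set f : ZMod L → A := fun z => cw a n (m + 1) z.val with hf
      have hdvdL : LL a n (m + 1) ∣ L := LL_dvd_succ a n hn (m + 1)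
      have hcast : ∀ (z : ZMod L) (u : ℕ), f (z + (u : ZMod L)) = cw a n (m + 1) (z.val + u) := by
        intro z u
        show cw a n (m + 1) ((z + (u : ZMod L)).val) = cw a n (m + 1) (z.val + u)
        apply cw_congr
        rw [ZMod.val_add, ZMod.val_natCast]
        rw [Nat.mod_mod_of_dvd _ hdvdL]
        have h1 : z.val + u % L ≡ z.val + u [MOD LL a n (m + 1)] :=
          Nat.ModEq.add_left _ ((Nat.mod_modEq u L).of_dvd hdvdL)
        exact h1
      set S : AddSubgroup (ZMod L) :=
        { carrier := {u | ∀ z, f (z + u) = f z}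
          zero_mem' := by intro z; rw [add_zero]
          add_mem' := by
            intro u v hu hv z
            calc f (z + (u + v)) = f ((z + u) + v) := by rw [add_assoc]
            _ = f (z + u) := hv (z + u)
            _ = f z := hu z
          neg_mem' := by
            intro u hu z
            have := hu (z + -u)
            rw [add_assoc, neg_add_cancel, add_zero] at this
            exact this.symm } with hS
      have mem_S : ∀ u : ℕ, ((u : ZMod L) ∈ S) ↔ ∀ j : ℕ, cw a n (m + 1) (j + u) = cw a n (m + 1) j := by
        intro u
        constructor
        · intro hu j
          have h0 := hu (j : ZMod L)
          rw [hcast] at h0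
          have hval : ((j : ZMod L)).val = j % L := ZMod.val_natCast _ _
          have e2 : cw a n (m + 1) (((j : ZMod L)).val + u) = cw a n (m + 1) (j + u) := by
            apply cw_congr
            rw [hval]
            exact Nat.ModEq.add_right _ ((Nat.mod_modEq j L).of_dvd hdvdL)
          have e3 : f (j : ZMod L) = cw a n (m + 1) j := by
            show cw a n (m + 1) ((j : ZMod L)).val = _
            apply cw_congr
            rw [hval]
            exact (Nat.mod_modEq j L).of_dvd hdvdL
          rw [← e2, ← e3, h0]
        · intro hu z
          rw [hcast]
          exact hu z.val
      have hdS : (d : ZMod L) ∈ S := (mem_S d).mpr per_d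
      have hL'S : ((LL a n (m + 1) : ℕ) : ZMod L) ∈ S := (mem_S _).mpr per_L'
      set g : ℕ := Nat.gcd d (LL a n (m + 1)) with hgdef
      have hgS : ((g : ℕ) : ZMod L) ∈ S := by
        have hbez := Nat.gcd_eq_gcd_ab d (LL a n (m + 1))
        have h1 : ((g : ℤ) : ZMod L) = (Nat.gcdA d (LL a n (m + 1))) • ((d : ℕ) : ZMod L)
            + (Nat.gcdB d (LL a n (m + 1))) • (((LL a n (m + 1)) : ℕ) : ZMod L) := by
          rw [hbez]
          push_cast
          rw [zsmul_eq_mul, zsmul_eq_mul]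
          ring
        have h2 : ((g : ℤ) : ZMod L) = ((g : ℕ) : ZMod L) := by push_cast; ring
        rw [← h2, h1]
        exact add_mem (AddSubgroup.zsmul_mem S hdS _) (AddSubgroup.zsmul_mem S hL'S _)
      have per_g : ∀ j : ℕ, cw a n (m + 1) (j + g) = cw a n (m + 1) j := (mem_S g).mp hgS
      -- Step 3: apply induction hypothesis with g
      have hgd : g ∣ d := Nat.gcd_dvd_left _ _
      have hgL' : g ∣ LL a n (m + 1) := Nat.gcd_dvd_right _ _
      have hgpos : 0 < g := Nat.gcd_pos_of_pos_left _ hd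
      have hgne : g ≠ LL a n (m + 1) := by
        intro hgeq
        exact hdvd (Nat.dvd_iff_mod_eq_zero.mp (hgeq ▸ hgd))
      have hglt : g < LL a n (m + 1) :=
        lt_of_le_of_ne (Nat.le_of_dvd hL'pos hgL') hgne
      have ihg := ih g hgpos hglt (by
        intro j hj hjg
        have hjL' : j < LL a n (m + 1) := by omega
        have e1 : cw a n m j = cw a n (m + 1) j := by
          rw [cw_succ_nonsep a n hn m j (by rw [Nat.mod_eq_of_lt hjL']; omega)]
        have e2 : cw a n m (j + g) = cw a n (m + 1) (j + g) := by
          rw [cw_succ_nonsep a n hn m (j + g) hjg]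
        rw [e1, e2, per_g])
      obtain ⟨hLmg, -⟩ := ihg
      -- Step 4: contradiction
      have hkey : a (m + 1) = a m := by
        have e0 : cw a n (m + 1) ((pBlock a n (m + 1)).length) = a (m + 1) := by
          apply cw_succ_sep
          exact Nat.mod_eq_of_lt (by omega)
        have heg : (pBlock a n (m + 1)).length - g + g = (pBlock a n (m + 1)).length := by omega
        have e1 : cw a n (m + 1) ((pBlock a n (m + 1)).length - g) = a (m + 1) := by
          rw [← e0]
          conv_rhs => rw [← heg]
          rw [per_g]
        have hegl : (pBlock a n (m + 1)).length - g < (pBlock a n (m + 1)).length := by omega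
        have e2 : cw a n (m + 1) ((pBlock a n (m + 1)).length - g)
            = cw a n m ((pBlock a n (m + 1)).length - g) := by
          apply cw_succ_nonsep a n hn
          rw [Nat.mod_eq_of_lt (by omega)]
          omega
        have e3 : cw a n m ((pBlock a n (m + 1)).length - g) = a m := by
          apply cw_self_sep
          have hd1 : LL a n m ∣ LL a n (m + 1) := LL_dvd_succ a n hn m
          have hd2 : LL a n m ∣ g := hLmg
          have hsub : LL a n m ∣ (LL a n (m + 1) - g) := Nat.dvd_sub hd1 hd2
          have hpos' : 0 < LL a n (m + 1) - g := by omega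
          have : (pBlock a n (m + 1)).length - g = (LL a n (m + 1) - g) - 1 := by omega
          rw [this, mod_pred (LL_pos a n m) hpos' hsub]
          rfl
        rw [← e1, e2, e3]
      exact ha m hkey


lemma add_multiple_mod {b q : ℕ} (x : ℕ) (h : b ∣ q) : (q + x) % b = x % b := by
  rw [add_comm, Nat.add_mod, Nat.dvd_iff_mod_eq_zero.mp h, Nat.add_zero,
    Nat.mod_mod_of_dvd _ dvd_rfl]

lemma mod_two_cases (v L : ℕ) (hv : v < 2 * L) : v % L = v ∨ v % L + L = v := by
  rcases Nat.lt_or_ge v L with h | h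
  · left; exact Nat.mod_eq_of_lt h
  · right; rw [Nat.mod_eq_sub_mod h, Nat.mod_eq_of_lt (by omega)]; omega

/-- the candidate words of length `LL (k+1)`: a suffix of the periodized block,
one free letter at position `t`, then a prefix. -/
def wrd (k t : ℕ) (x : A) : List A :=
  List.ofFn (fun i : Fin (LL a n (k + 1)) =>
    if (i : ℕ) = t then x else cw a n k ((i : ℕ) + ((pBlock a n (k + 1)).length - t)))

lemma wrd_length (k t : ℕ) (x : A) : (wrd a n k t x).length = LL a n (k + 1) := by
  simp [wrd, LL]

lemma wrd_getElem (k t : ℕ) (x : A) (i : ℕ) (h : i < (wrd a n k t x).length) :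
    (wrd a n k t x)[i]
      = if i = t then x else cw a n k (i + ((pBlock a n (k + 1)).length - t)) := by
  unfold wrd at h ⊢
  rw [List.getElem_ofFn]

lemma wrd_occurs (hn : ∀ k, 2 ≤ n k) (k t : ℕ) (x : A) (ht : t < LL a n (k + 1))
    (hx : ∃ r, k + 1 ≤ r ∧ a r = x) : occursIn1 (wrd a n k t x) (pInf a n) := by
  obtain ⟨r, hr, rfl⟩ := hx
  have hdvd : LL a n (k + 1) ∣ LL a n r := LL_dvd a n hn hr
  have hle : LL a n (k + 1) ≤ LL a n r := Nat.le_of_dvd (LL_pos a n r) hdvd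
  have hlen1 : LL a n (k + 1) = (pBlock a n (k + 1)).length + 1 := rfl
  have hlenr : LL a n r = (pBlock a n r).length + 1 := rfl
  have htle : t ≤ (pBlock a n r).length := by omega
  have hmodr : (pBlock a n r).length % LL a n (k + 1) = (pBlock a n (k + 1)).length :=
    sep_cascade a n hn hr (Nat.mod_eq_of_lt (by omega))
  have hdm := Nat.div_add_mod ((pBlock a n r).length) (LL a n (k + 1))
  refine ⟨(pBlock a n r).length - t, ?_⟩
  intro i
  have hi : (i : ℕ) < LL a n (k + 1) := lt_of_lt_of_eq i.isLt (wrd_length a n k t _)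
  rw [List.get_eq_getElem, wrd_getElem]
  by_cases hit : (i : ℕ) = t
  · rw [if_pos hit, hit, show (pBlock a n r).length - t + t = (pBlock a n r).length by omega]
    exact (pInf_len a n hn r).symm
  · rw [if_neg hit]
    have hqd : LL a n (k + 1) * ((pBlock a n r).length / LL a n (k + 1))
        + (pBlock a n (k + 1)).length = (pBlock a n r).length := by omega
    set q := LL a n (k + 1) * ((pBlock a n r).length / LL a n (k + 1)) with hq
    have hdvq : LL a n (k + 1) ∣ q := Dvd.intro _ rfl
    have hsplit : (pBlock a n r).length - t + (i : ℕ)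
        = q + (((pBlock a n (k + 1)).length - t) + (i : ℕ)) := by omega
    have hcond : ((pBlock a n r).length - t + (i : ℕ)) % LL a n (k + 1)
        ≠ (pBlock a n (k + 1)).length := by
      rw [hsplit, add_multiple_mod _ hdvq]
      rcases Nat.lt_or_ge (((pBlock a n (k + 1)).length - t) + (i : ℕ)) (LL a n (k + 1))
        with h | h
      · rw [Nat.mod_eq_of_lt h]; omega
      · rw [Nat.mod_eq_sub_mod h, Nat.mod_eq_of_lt (by omega)]; omega
    rw [pInf_eq_cw a n hn k _ hcond]
    apply cw_congr
    rw [hsplit, add_multiple_mod _ (dvd_trans (LL_dvd a n hn (Nat.le_succ k)) hdvq),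
      add_comm ((pBlock a n (k + 1)).length - t) (i : ℕ)]

lemma occurs_wrd (hn : ∀ k, 2 ≤ n k) (k : ℕ) (u : List A)
    (hlen : u.length = LL a n (k + 1)) (hocc : occursIn1 u (pInf a n)) :
    ∃ t x, t < LL a n (k + 1) ∧ (∃ r, k + 1 ≤ r ∧ a r = x) ∧ u = wrd a n k t x := by
  obtain ⟨j, hj⟩ := hocc
  have hlen1 : LL a n (k + 1) = (pBlock a n (k + 1)).length + 1 := rfl
  have hjm : j % LL a n (k + 1) < LL a n (k + 1) := Nat.mod_lt _ (LL_pos a n _)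
  set jm := j % LL a n (k + 1) with hjmdef
  set t := (pBlock a n (k + 1)).length - jm with htdef
  have hdm := Nat.div_add_mod j (LL a n (k + 1))
  set q := LL a n (k + 1) * (j / LL a n (k + 1)) with hq
  have hdvq : LL a n (k + 1) ∣ q := Dvd.intro _ rfl
  have hsep : (j + t) % LL a n (k + 1) = (pBlock a n (k + 1)).length := by
    have : j + t = q + (pBlock a n (k + 1)).length := by omega
    rw [this, add_multiple_mod _ hdvq, Nat.mod_eq_of_lt (by omega)]
  obtain ⟨r, hr, har⟩ := pInf_sep a n hn (k + 1) (j + t) hsep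
  refine ⟨t, pInf a n (j + t), by omega, ⟨r, hr, har.symm⟩, ?_⟩
  apply List.ext_getElem (by rw [hlen, wrd_length])
  intro i h1 h2
  have hi : i < LL a n (k + 1) := by rw [hlen] at h1; exact h1
  have hget : u[i] = pInf a n (j + i) := by
    have := hj ⟨i, h1⟩
    simpa using this
  rw [hget, wrd_getElem]
  by_cases hit : i = t
  · rw [if_pos hit, hit]
  · rw [if_neg hit]
    have hsplit : j + i = q + (jm + i) := by omega
    have hcond : (j + i) % LL a n (k + 1) ≠ (pBlock a n (k + 1)).length := by
      rw [hsplit, add_multiple_mod _ hdvq]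
      rcases Nat.lt_or_ge (jm + i) (LL a n (k + 1)) with h | h
      · rw [Nat.mod_eq_of_lt h]; omega
      · rw [Nat.mod_eq_sub_mod h, Nat.mod_eq_of_lt (by omega)]; omega
    rw [pInf_eq_cw a n hn k _ hcond]
    apply cw_congr
    have hjm' : (pBlock a n (k + 1)).length - t = jm := by omega
    rw [hjm', hsplit, add_multiple_mod _ (dvd_trans (LL_dvd a n hn (Nat.le_succ k)) hdvq),
      add_comm jm i]


lemma wrd_ak_getElem (hn : ∀ k, 2 ≤ n k) (k t i : ℕ)
    (ht : t ≤ (pBlock a n (k + 1)).length) (h : i < (wrd a n k t (a k)).length) :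
    (wrd a n k t (a k))[i] = cw a n k (i + ((pBlock a n (k + 1)).length - t)) := by
  rw [wrd_getElem]
  by_cases hit : i = t
  · rw [if_pos hit, hit,
      show t + ((pBlock a n (k + 1)).length - t) = (pBlock a n (k + 1)).length by omega]
    symm
    apply cw_self_sep
    exact sep_cascade a n hn (by omega : k ≤ k + 1)
      (Nat.mod_eq_of_lt (by rw [LL]; omega))
  · rw [if_neg hit]

lemma wrd_ak_congr (hn : ∀ k, 2 ≤ n k) (k t t' : ℕ)
    (ht : t ≤ (pBlock a n (k + 1)).length) (ht' : t' ≤ (pBlock a n (k + 1)).length)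
    (hmod : t % LL a n k = t' % LL a n k) :
    wrd a n k t (a k) = wrd a n k t' (a k) := by
  apply List.ext_getElem (by rw [wrd_length, wrd_length])
  intro i h1 h2
  rw [wrd_ak_getElem a n hn k t i ht h1, wrd_ak_getElem a n hn k t' i ht' h2]
  apply cw_congr
  have h3 : (pBlock a n (k + 1)).length - t ≡ (pBlock a n (k + 1)).length - t'
      [MOD LL a n k] := by
    apply Nat.ModEq.add_right_cancel (hmod : t ≡ t' [MOD LL a n k])
    rw [Nat.sub_add_cancel ht, Nat.sub_add_cancel ht']
  exact Nat.ModEq.add_left i h3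

lemma wrd_inj (hn : ∀ k, 2 ≤ n k) (ha : ∀ k, a (k + 1) ≠ a k) (k t t' : ℕ) (x x' : A)
    (ht : t < LL a n (k + 1)) (ht' : t' < LL a n (k + 1))
    (he : wrd a n k t x = wrd a n k t' x') :
    x = x' ∧ (t = t' ∨ (x = a k ∧ t % LL a n k = t' % LL a n k)) := by
  have hlen1 : LL a n (k + 1) = (pBlock a n (k + 1)).length + 1 := rfl
  have hk : LL a n k ∣ LL a n (k + 1) := LL_dvd_succ a n hn k
  have hgetEq : ∀ i, i < LL a n (k + 1) →
      (if i = t then x else cw a n k (i + ((pBlock a n (k + 1)).length - t)))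
      = (if i = t' then x' else cw a n k (i + ((pBlock a n (k + 1)).length - t'))) := by
    intro i hi
    have e1 := wrd_getElem a n k t x i (by rw [wrd_length]; exact hi)
    have e2 := wrd_getElem a n k t' x' i (by rw [wrd_length]; exact hi)
    rw [← e1, ← e2]
    exact List.getElem_of_eq he _
  by_cases htt : t = t'
  · subst htt
    have h0 := hgetEq t ht
    rw [if_pos rfl, if_pos rfl] at h0
    exact ⟨h0, Or.inl rfl⟩
  · have hLpos : 0 < LL a n (k + 1) := LL_pos a n _
    set v := t + (LL a n (k + 1) - t') with hv
    have hvlt : v < 2 * LL a n (k + 1) := by omega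
    set d := v % LL a n (k + 1) with hd
    have hvd : v = d ∨ v = d + LL a n (k + 1) := by
      rcases mod_two_cases v (LL a n (k + 1)) hvlt with h | h
      · left; omega
      · right; omega
    have hdlt : d < LL a n (k + 1) := Nat.mod_lt _ hLpos
    have hdpos : 0 < d := by rcases hvd with h | h <;> omega
    have hyp : ∀ jj, jj < (pBlock a n (k + 1)).length →
        (jj + d) % LL a n (k + 1) ≠ (pBlock a n (k + 1)).length →
        cw a n k jj = cw a n k (jj + d) := by
      intro jj hjj hcond
      set i := (jj + t + 1) % LL a n (k + 1) with hi
      have hiL : i < LL a n (k + 1) := Nat.mod_lt _ hLpos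
      have hmodeq : i ≡ jj + t + 1 [MOD LL a n (k + 1)] := Nat.mod_modEq _ _
      have hit : i ≠ t := by
        intro h
        have h1 : (jj + 1) + t ≡ 0 + t [MOD LL a n (k + 1)] := by
          show ((jj + 1) + t) % _ = (0 + t) % _
          rw [Nat.zero_add, show jj + 1 + t = jj + t + 1 by omega, ← hi, h,
            Nat.mod_eq_of_lt ht]
        have h2 := Nat.ModEq.add_right_cancel' t h1
        have h3 := Nat.modEq_zero_iff_dvd.mp h2
        have := Nat.le_of_dvd (by omega) h3
        omega
      have hit' : i ≠ t' := by
        intro h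
        apply hcond
        have e : jj + v + 1 = (jj + t + 1) + (LL a n (k + 1) - t') := by omega
        have hm : jj + v + 1 ≡ i + (LL a n (k + 1) - t') [MOD LL a n (k + 1)] := by
          rw [e]
          exact Nat.ModEq.add_right _ (Nat.mod_modEq _ _).symm
        rw [h, show t' + (LL a n (k + 1) - t') = LL a n (k + 1) by omega] at hm
        have h2 : LL a n (k + 1) ∣ (jj + v + 1) :=
          Nat.modEq_zero_iff_dvd.mp (hm.trans (Nat.modEq_zero_iff_dvd.mpr dvd_rfl))
        have h3 : (jj + v) % LL a n (k + 1) = LL a n (k + 1) - 1 := by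
          have h4 := mod_pred hLpos (show 0 < jj + v + 1 by omega) h2
          rwa [Nat.add_sub_cancel] at h4
        have h4 : (jj + d) % LL a n (k + 1) = (jj + v) % LL a n (k + 1) := by
          rw [Nat.add_mod, hd, Nat.mod_mod_of_dvd _ dvd_rfl, ← Nat.add_mod]
        rw [h4, h3]
        omega
      have h5 := hgetEq i hiL
      rw [if_neg hit, if_neg hit'] at h5
      have hmod1 : (i + ((pBlock a n (k + 1)).length - t)) ≡ jj [MOD LL a n (k + 1)] := by
        have h6 : i + ((pBlock a n (k + 1)).length - t)
            ≡ (jj + t + 1) + ((pBlock a n (k + 1)).length - t) [MOD LL a n (k + 1)] :=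
          Nat.ModEq.add_right _ hmodeq
        have e : (jj + t + 1) + ((pBlock a n (k + 1)).length - t) = jj + LL a n (k + 1) := by
          omega
        rw [e] at h6
        exact h6.trans (show (jj + LL a n (k + 1)) % _ = jj % _ from Nat.add_mod_right _ _)
      have hmod2 : (i + ((pBlock a n (k + 1)).length - t')) ≡ jj + d [MOD LL a n (k + 1)] := by
        have h6 : i + ((pBlock a n (k + 1)).length - t')
            ≡ (jj + t + 1) + ((pBlock a n (k + 1)).length - t') [MOD LL a n (k + 1)] :=
          Nat.ModEq.add_right _ hmodeq
        have e : (jj + t + 1) + ((pBlock a n (k + 1)).length - t') = jj + v := by omega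
        rw [e] at h6
        exact h6.trans (Nat.ModEq.add_left jj (Nat.mod_modEq v _).symm)
      have e_l : cw a n k jj = cw a n k (i + ((pBlock a n (k + 1)).length - t)) :=
        cw_congr a n k ((hmod1.of_dvd hk).symm)
      rw [e_l, h5]
      exact cw_congr a n k (hmod2.of_dvd hk)
    obtain ⟨hdvdk, hcwd⟩ := core a n hn ha k d hdpos hdlt hyp
    have hx : x = a k := by
      have h0 := hgetEq t ht
      rw [if_pos rfl, if_neg htt] at h0
      rw [h0, ← hcwd]
      apply cw_congr
      have e : t + ((pBlock a n (k + 1)).length - t') = v - 1 := by omega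
      rw [e]
      rcases hvd with h | h
      · rw [h]
      · rw [h, show d + LL a n (k + 1) - 1 = LL a n (k + 1) + (d - 1) by omega,
          add_multiple_mod _ hk]
    have hx' : x' = a k := by
      have h0 := hgetEq t' ht'
      rw [if_neg (fun hh => htt hh.symm), if_pos rfl] at h0
      rw [← h0]
      apply cw_self_sep
      have hvv : t' + ((pBlock a n (k + 1)).length - t) = 2 * LL a n (k + 1) - v - 1 := by
        omega
      rcases hvd with h | h
      · rw [hvv, h]
        have hc : LL a n k ∣ (2 * LL a n (k + 1) - d) :=
          Nat.dvd_sub (Dvd.dvd.mul_left hk 2) hdvdk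
        have h7 := mod_pred (LL_pos a n k) (show 0 < 2 * LL a n (k + 1) - d by omega) hc
        rw [show 2 * LL a n (k + 1) - d - 1 = (2 * LL a n (k + 1) - d) - 1 by omega, h7]
        rfl
      · rw [hvv, h]
        have hc : LL a n k ∣ (LL a n (k + 1) - d) := Nat.dvd_sub hk hdvdk
        have h7 := mod_pred (LL_pos a n k) (show 0 < LL a n (k + 1) - d by omega) hc
        rw [show 2 * LL a n (k + 1) - (d + LL a n (k + 1)) - 1
            = (LL a n (k + 1) - d) - 1 by omega, h7]
        rfl
    have hmodtt : t % LL a n k = t' % LL a n k := by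
      have hdvdv : LL a n k ∣ v := by
        rcases hvd with h | h
        · rw [h]; exact hdvdk
        · rw [h]; exact Nat.dvd_add hdvdk hk
      have e1 : t % LL a n k = (v + t') % LL a n k := by
        rw [show v + t' = LL a n (k + 1) + t by omega, add_multiple_mod _ hk]
      rw [e1, add_multiple_mod _ hdvdv]
    exact ⟨hx.trans hx'.symm, Or.inr ⟨hx, hmodtt⟩⟩

end Toep

open Toep in
/-- The complexity of the simple Toeplitz subshift at length `|p^(k)| + 1` equals
`(|A_k| − 1)(|p^(k)|+1) + 1_{A_{k+1}}(a_k)(|p^(k−1)|+1)`. -/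
theorem complexity_at_block_length {A : Type*} [Fintype A] (a : ℕ → A) (n : ℕ → ℕ)
    (hn : ∀ k, 2 ≤ n k) (ha : ∀ k, a (k + 1) ≠ a k) (k : ℕ) :
    complexity (pInf a n) ((pBlock a n (k + 1)).length + 1)
      = (Nat.card ↥{x : A | ∃ j, k ≤ j ∧ a j = x} - 1) * ((pBlock a n (k + 1)).length + 1)
        + (if (∃ j, k + 1 ≤ j ∧ a j = a k) then 1 else 0) * ((pBlock a n k).length + 1) := by
  classical
  have hlen1 : LL a n (k + 1) = (pBlock a n (k + 1)).length + 1 := rfl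
  have hlen0 : LL a n k = (pBlock a n k).length + 1 := rfl
  set S1 : Finset A := Finset.univ.filter (fun x => ∃ r, k + 1 ≤ r ∧ a r = x) with hS1
  set Φ : Finset (ℕ × A) :=
    ((Finset.range (LL a n (k + 1))) ×ˢ (S1.erase (a k)))
      ∪ ((Finset.range (LL a n k)) ×ˢ (S1.filter (· = a k))) with hΦ
  set f : ℕ × A → List A := fun q => wrd a n k q.1 q.2 with hf
  have hLL' : LL a n k ∣ LL a n (k + 1) := LL_dvd_succ a n hn k
  have hL'lt : LL a n k < LL a n (k + 1) := by
    have h1 := LL_succ a n hn k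
    have h2 : 2 * LL a n k ≤ n k * LL a n k := Nat.mul_le_mul_right _ (hn k)
    have h3 := LL_pos a n k
    omega
  have hmemΦ : ∀ p : ℕ × A, p ∈ Φ →
      (p.1 < LL a n (k + 1) ∧ (∃ r, k + 1 ≤ r ∧ a r = p.2)
        ∧ (p.2 = a k → p.1 < LL a n k)) := by
    rintro ⟨t, x⟩ hmem
    rw [hΦ, Finset.mem_union] at hmem
    rcases hmem with hm | hm
    · rw [Finset.mem_product] at hm
      obtain ⟨h1, h2⟩ := hm
      rw [Finset.mem_range] at h1
      rw [Finset.mem_erase] at h2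
      rw [hS1, Finset.mem_filter] at h2
      exact ⟨h1, h2.2.2, fun hc => absurd hc h2.1⟩
    · rw [Finset.mem_product] at hm
      obtain ⟨h1, h2⟩ := hm
      rw [Finset.mem_range] at h1
      rw [Finset.mem_filter] at h2
      have h3 := h2.1
      rw [hS1, Finset.mem_filter] at h3
      exact ⟨by omega, h3.2, fun _ => h1⟩
  have hsub : {u : List A | u.length = LL a n (k + 1) ∧ occursIn1 u (pInf a n)}
      = ↑(Φ.image f) := by
    ext u
    simp only [Set.mem_setOf_eq, Finset.coe_image, Set.mem_image, Finset.mem_coe]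
    constructor
    · rintro ⟨hlen, hocc⟩
      obtain ⟨t, x, htL, hx, rfl⟩ := occurs_wrd a n hn k u hlen hocc
      by_cases hxa : x = a k
      · subst hxa
        refine ⟨(t % LL a n k, a k), ?_, ?_⟩
        · rw [hΦ]
          apply Finset.mem_union_right
          rw [Finset.mem_product]
          refine ⟨Finset.mem_range.mpr (Nat.mod_lt _ (LL_pos a n k)), ?_⟩
          rw [Finset.mem_filter]
          refine ⟨?_, rfl⟩
          rw [hS1, Finset.mem_filter]
          exact ⟨Finset.mem_univ _, hx⟩
        · show wrd a n k (t % LL a n k) (a k) = wrd a n k t (a k)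
          have hm := Nat.mod_lt t (LL_pos a n k)
          apply wrd_ak_congr a n hn k _ _ (by omega) (by omega)
          rw [Nat.mod_mod_of_dvd _ dvd_rfl]
      · refine ⟨(t, x), ?_, rfl⟩
        rw [hΦ]
        apply Finset.mem_union_left
        rw [Finset.mem_product]
        refine ⟨Finset.mem_range.mpr htL, Finset.mem_erase.mpr ⟨hxa, ?_⟩⟩
        rw [hS1, Finset.mem_filter]
        exact ⟨Finset.mem_univ _, hx⟩
    · rintro ⟨⟨t, x⟩, hmem, rfl⟩
      obtain ⟨h1, h2, _⟩ := hmemΦ _ hmem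
      exact ⟨wrd_length a n k t x, wrd_occurs a n hn k t x h1 h2⟩
  have hinjOn : Set.InjOn f ↑Φ := by
    rintro ⟨t, x⟩ hmem ⟨t', x'⟩ hmem' heq
    obtain ⟨hb1, _, hb3⟩ := hmemΦ _ hmem
    obtain ⟨hb1', _, hb3'⟩ := hmemΦ _ hmem'
    obtain ⟨hxx, hcase⟩ := wrd_inj a n hn ha k t t' x x' hb1 hb1' heq
    rcases hcase with h | ⟨hak, hmod⟩
    · rw [Prod.mk.injEq]; exact ⟨h, hxx⟩
    · have ht1 : t < LL a n k := hb3 hak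
      have ht2 : t' < LL a n k := hb3' (hxx ▸ hak)
      rw [Nat.mod_eq_of_lt ht1, Nat.mod_eq_of_lt ht2] at hmod
      rw [Prod.mk.injEq]; exact ⟨hmod, hxx⟩
  have hdisj : Disjoint ((Finset.range (LL a n (k + 1))) ×ˢ (S1.erase (a k)))
      ((Finset.range (LL a n k)) ×ˢ (S1.filter (· = a k))) := by
    rw [Finset.disjoint_left]
    rintro ⟨t, x⟩ hm1 hm2
    rw [Finset.mem_product, Finset.mem_erase] at hm1
    rw [Finset.mem_product, Finset.mem_filter] at hm2
    exact hm1.2.1 hm2.2.2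
  have hcardΦ : Φ.card = LL a n (k + 1) * (S1.erase (a k)).card
      + LL a n k * (S1.filter (· = a k)).card := by
    rw [hΦ, Finset.card_union_of_disjoint hdisj, Finset.card_product, Finset.card_product,
      Finset.card_range, Finset.card_range]
  have hfiltcard : (S1.filter (· = a k)).card
      = if (∃ r, k + 1 ≤ r ∧ a r = a k) then 1 else 0 := by
    by_cases hc : a k ∈ S1
    · have he : Finset.filter (fun x => x = a k) S1 = {a k} := by
        ext y
        simp only [Finset.mem_filter, Finset.mem_singleton]
        exact ⟨fun h => h.2, fun h => ⟨h ▸ hc, h⟩⟩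
      rw [he, Finset.card_singleton]
      have hc2 := hc
      rw [hS1, Finset.mem_filter] at hc2
      rw [if_pos hc2.2]
    · have he : Finset.filter (fun x => x = a k) S1 = ∅ := by
        ext y
        simp only [Finset.mem_filter, Finset.notMem_empty, iff_false, not_and]
        intro hy hyy
        exact absurd (hyy ▸ hy) hc
      rw [he, Finset.card_empty, if_neg ?_]
      intro hcon
      apply hc
      rw [hS1, Finset.mem_filter]
      exact ⟨Finset.mem_univ _, hcon⟩
  have hbig : {x : A | ∃ j, k ≤ j ∧ a j = x} = ↑(insert (a k) S1) := by
    ext x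
    simp only [Set.mem_setOf_eq, Finset.coe_insert, Set.mem_insert_iff, Finset.mem_coe,
      hS1, Finset.mem_filter, Finset.mem_univ, true_and]
    constructor
    · rintro ⟨j, hj, rfl⟩
      rcases Nat.eq_or_lt_of_le hj with h | h
      · left; rw [← h]
      · right; exact ⟨j, by omega, rfl⟩
    · rintro (h | ⟨j, hj, h⟩)
      · exact ⟨k, le_refl _, h.symm⟩
      · exact ⟨j, by omega, h⟩
  have hcardbig : Nat.card ↥{x : A | ∃ j, k ≤ j ∧ a j = x}
      = (S1.erase (a k)).card + 1 := by
    rw [Nat.card_coe_set_eq, hbig, Set.ncard_coe_finset]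
    by_cases hc : a k ∈ S1
    · rw [Finset.insert_eq_self.mpr hc, ← Finset.card_erase_add_one hc]
    · rw [Finset.card_insert_of_notMem hc, Finset.erase_eq_of_notMem hc]
  have hcompl : complexity (pInf a n) (LL a n (k + 1)) = (Φ.image f).card := by
    rw [complexity]
    have e1 : Nat.card {u : List A // u.length = LL a n (k + 1) ∧ occursIn1 u (pInf a n)}
        = Nat.card ↥{u : List A | u.length = LL a n (k + 1) ∧ occursIn1 u (pInf a n)} := rfl
    rw [e1, Nat.card_coe_set_eq, hsub, Set.ncard_coe_finset]
  show complexity (pInf a n) (LL a n (k + 1))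
      = (Nat.card ↥{x : A | ∃ j, k ≤ j ∧ a j = x} - 1) * LL a n (k + 1)
        + (if (∃ j, k + 1 ≤ j ∧ a j = a k) then 1 else 0) * LL a n k
  rw [hcompl, Finset.card_image_of_injOn hinjOn, hcardΦ, hfiltcard, hcardbig,
    Nat.add_sub_cancel]
  ring
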